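/- Let α ∈ (-1/2, 1/2), τ ∈ (0,1), and C > 0. Define d_n = exp(n^(1+τ) + n^τ) and h_n = exp(-n^(1+τ)). Then there exist constants C', c' > 0 such that for all sufficiently large n, C d_{n-1}^(1-2α) h_n^2 ≤ C' exp(-c' n^τ) h_n^(2α+1). -/
import Mathlib


theorem low_frequency_negligible (α τ C : ℝ)
    (hα : α ∈ Set.Ioo (-(1:ℝ)/2) (1/2)) (hτ : τ ∈ Set.Ioo (0:ℝ) 1) (hC : 0 < C) :
    ∃ C' c' : ℝ, 0 < C' ∧ 0 < c' ∧ ∃ N : ℕ, ∀ n : ℕ, N ≤ n →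
      C * (Real.exp (((n:ℝ) - 1) ^ (1 + τ) + ((n:ℝ) - 1) ^ τ)) ^ (1 - 2 * α) *
          (Real.exp (-(n:ℝ) ^ (1 + τ))) ^ (2 : ℝ)
        ≤ C' * Real.exp (-c' * (n:ℝ) ^ τ) *
          (Real.exp (-(n:ℝ) ^ (1 + τ))) ^ (2 * α + 1) := by
  obtain ⟨hα1, hα2⟩ := hα
  obtain ⟨hτ1, hτ2⟩ := hτ
  have h2α : 0 < 1 - 2 * α := by linarith
  refine ⟨C, (1 - 2 * α) * τ / 2, hC, by positivity, 2, fun n hn => ?_⟩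
  have hx1 : (1:ℝ) ≤ (n:ℝ) - 1 := by
    have : (2:ℝ) ≤ (n:ℝ) := by exact_mod_cast hn
    linarith
  set x : ℝ := (n:ℝ) - 1 with hxdef
  have hx0 : 0 < x := by linarith
  have hn1 : (n:ℝ) = x + 1 := by ring
  -- Bernoulli: (x+1)^(1+τ) ≥ x^(1+τ) + (1+τ) x^τ
  have hB : x ^ (1 + τ) + (1 + τ) * x ^ τ ≤ (x + 1) ^ (1 + τ) := by
    have hs : -1 ≤ 1 / x := le_trans (by norm_num) (by positivity : (0:ℝ) ≤ 1 / x)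
    have hb := one_add_mul_self_le_rpow_one_add hs (p := 1 + τ) (by linarith)
    have hx1' : (x + 1) = x * (1 + 1/x) := by field_simp
    have hmul : (x + 1) ^ (1 + τ) = x ^ (1 + τ) * (1 + 1/x) ^ (1 + τ) := by
      rw [hx1', Real.mul_rpow hx0.le (by positivity)]
    have hxt : x ^ (1 + τ) * (1 / x) = x ^ τ := by
      rw [show (1:ℝ) + τ = τ + 1 by ring, Real.rpow_add hx0, Real.rpow_one]
      field_simp
    have h1 : x ^ (1 + τ) * (1 + (1 + τ) * (1 / x)) ≤ x ^ (1 + τ) * (1 + 1/x) ^ (1 + τ) :=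
      mul_le_mul_of_nonneg_left hb (by positivity)
    calc x ^ (1 + τ) + (1 + τ) * x ^ τ
        = x ^ (1 + τ) * (1 + (1 + τ) * (1 / x)) := by
          rw [mul_add, mul_one, ← mul_assoc, mul_comm (x ^ (1+τ)) (1+τ), mul_assoc, hxt]
      _ ≤ (x + 1) ^ (1 + τ) := by rw [hmul]; exact h1
  -- (x+1)^τ ≤ 2 x^τ
  have hT : (x + 1) ^ τ ≤ 2 * x ^ τ := by
    have h1 : (x + 1) ^ τ ≤ (2 * x) ^ τ :=
      Real.rpow_le_rpow (by linarith) (by linarith) hτ1.le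
    have h2 : (2 * x) ^ τ = 2 ^ τ * x ^ τ := Real.mul_rpow (by norm_num) hx0.le
    have h3 : (2:ℝ) ^ τ ≤ 2 ^ (1:ℝ) :=
      Real.rpow_le_rpow_of_exponent_le (by norm_num) hτ2.le
    have h4 : (2:ℝ) ^ (1:ℝ) = 2 := Real.rpow_one 2
    nlinarith [Real.rpow_nonneg hx0.le τ]
  rw [hn1, ← Real.exp_mul, ← Real.exp_mul, ← Real.exp_mul]
  rw [mul_assoc, mul_assoc, ← Real.exp_add, ← Real.exp_add]
  refine mul_le_mul_of_nonneg_left (Real.exp_le_exp.mpr ?_) hC.le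
  have hxτ : 0 ≤ x ^ τ := Real.rpow_nonneg hx0.le τ
  nlinarith [mul_le_mul_of_nonneg_left hT (le_of_lt (by positivity : (0:ℝ) < (1 - 2*α) * τ / 2)),
    mul_le_mul_of_nonneg_left hB h2α.le]
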